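/- Let 𝔤 be a 3-dimensional real Lie algebra with a nondegenerate symmetric bilinear form B, and suppose there exist a B-orthonormal basis (v₁,v₂,v₃) of 𝔤 (with ε_i := B(v_i,v_i) ∈ {±1}) and λ₁,λ₂,λ₃ ∈ ℝ such that [v₁,v₂] = ε₃λ₃v₃, [v₂,v₃] = ε₁λ₁v₁, [v₃,v₁] = ε₂λ₂v₂ (this holds precisely when 𝔤 is unimodular and the canonical operator L of (𝔤,B) is diagonalizable). If (J₊,J₋,X₊,X₋,H,F) is a B₃-Kähler datum on (𝔤,B), then H = 0, F = 0, and either 𝔤 is abelian, or there exist a B-orthonormal basis (w₁,w₂,w₃) of 𝔤 with B(w₂,w₂) = 1 and a real number λ ≠ 0 such that [w₁,w₂] = ε₃'λw₃, [w₂,w₃] = ε₁'λw₁, [w₃,w₁] = 0 (where ε_i' := B(w_i,w_i)), X₋ = w₂ and X₊ = ±w₂. -/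

import Mathlib

set_option maxHeartbeats 2000000 in
theorem main_aux {𝔤 : Type*} [LieRing 𝔤] [LieAlgebra ℝ 𝔤]
    (B : LinearMap.BilinForm ℝ 𝔤)
    (hBsymm : ∀ x y, B x y = B y x)
    (hBnd : ∀ x, (∀ y, B x y = 0) → x = 0)
    (v : Module.Basis (Fin 3) ℝ 𝔤) (ε lam : Fin 3 → ℝ)
    (hε : ∀ i, ε i = 1 ∨ ε i = -1)
    (hortho : ∀ i j, i ≠ j → B (v i) (v j) = 0)
    (hdiag : ∀ i, B (v i) (v i) = ε i)
    (hb01 : ⁅v 0, v 1⁆ = (ε 2 * lam 2) • v 2)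
    (hb12 : ⁅v 1, v 2⁆ = (ε 0 * lam 0) • v 0)
    (hb20 : ⁅v 2, v 0⁆ = (ε 1 * lam 1) • v 1)
    (N : 𝔤 → 𝔤 → 𝔤)
    (hK : ∀ x y z, 2 * B (N x y) z = B ⁅x, y⁆ z - B ⁅y, z⁆ x + B ⁅z, x⁆ y)
    (Jp : 𝔤 →ₗ[ℝ] 𝔤) (Xp Xm : 𝔤)
    (hJpskew : ∀ x y, B (Jp x) y = - B x (Jp y))
    (hXp : B Xp Xp = 1) (hXm : B Xm Xm = 1)
    (hJp2 : ∀ x, Jp (Jp x) = -x + B x Xp • Xp)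
    (H : AlternatingMap ℝ 𝔤 ℝ (Fin 3)) (F : AlternatingMap ℝ 𝔤 ℝ (Fin 2))
    (hFXm : ∀ y : 𝔤, F ![Xm, y] = 0)
    (Hs : 𝔤 → 𝔤 → 𝔤) (hHs : ∀ x y z, B (Hs x y) z = H ![x, y, z])
    (Fs : 𝔤 → 𝔤) (hFs : ∀ x y, B (Fs x) y = F ![x, y])
    (hNXm : ∀ x, N x Xm = (-(1 / 2 : ℝ)) • Hs x Xm)
    (hNXp : ∀ x, N x Xp = (-(1 / 2 : ℝ)) • Hs Xp x - Jp (Fs x))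
    (ha0 : B Xm (v 0) ≠ 0) :
    H = 0 ∧ F = 0 ∧
    ((∀ x y : 𝔤, ⁅x, y⁆ = 0) ∨
      ∃ (w : Module.Basis (Fin 3) ℝ 𝔤) (l : ℝ), l ≠ 0 ∧
        (∀ i j, i ≠ j → B (w i) (w j) = 0) ∧
        (∀ i, B (w i) (w i) = 1 ∨ B (w i) (w i) = -1) ∧
        B (w 1) (w 1) = 1 ∧
        ⁅w 0, w 1⁆ = (B (w 2) (w 2) * l) • w 2 ∧
        ⁅w 1, w 2⁆ = (B (w 0) (w 0) * l) • w 0 ∧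
        ⁅w 2, w 0⁆ = 0 ∧
        Xm = w 1 ∧ (Xp = w 1 ∨ Xp = -w 1)) := by
  -- ε facts
  have hε2 : ∀ i, ε i * ε i = 1 := fun i => by rcases hε i with h | h <;> rw [h] <;> norm_num
  have hεne : ∀ i, ε i ≠ 0 := fun i => by rcases hε i with h | h <;> rw [h] <;> norm_num
  -- bracket table
  have hb10 : ⁅v 1, v 0⁆ = (-(ε 2 * lam 2)) • v 2 := by rw [← lie_skew, hb01, neg_smul]
  have hb21 : ⁅v 2, v 1⁆ = (-(ε 0 * lam 0)) • v 0 := by rw [← lie_skew, hb12, neg_smul]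
  have hb02 : ⁅v 0, v 2⁆ = (-(ε 1 * lam 1)) • v 1 := by rw [← lie_skew, hb20, neg_smul]
  have hb00 : ⁅v 0, v 0⁆ = 0 := lie_self _
  have hb11 : ⁅v 1, v 1⁆ = 0 := lie_self _
  have hb22 : ⁅v 2, v 2⁆ = 0 := lie_self _
  -- B table
  have hB01 : B (v 0) (v 1) = 0 := hortho 0 1 (by decide)
  have hB02 : B (v 0) (v 2) = 0 := hortho 0 2 (by decide)
  have hB10 : B (v 1) (v 0) = 0 := hortho 1 0 (by decide)
  have hB12 : B (v 1) (v 2) = 0 := hortho 1 2 (by decide)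
  have hB20 : B (v 2) (v 0) = 0 := hortho 2 0 (by decide)
  have hB21 : B (v 2) (v 1) = 0 := hortho 2 1 (by decide)
  have hB00 : B (v 0) (v 0) = ε 0 := hdiag 0
  have hB11 : B (v 1) (v 1) = ε 1 := hdiag 1
  have hB22 : B (v 2) (v 2) = ε 2 := hdiag 2
  -- coordinates
  obtain ⟨a0, a1, a2, hXmE⟩ : ∃ p q r, Xm = p • v 0 + q • v 1 + r • v 2 :=
    ⟨_, _, _, by conv_lhs => rw [← v.sum_repr Xm, Fin.sum_univ_three]⟩
  obtain ⟨b0, b1, b2, hXpE⟩ : ∃ p q r, Xp = p • v 0 + q • v 1 + r • v 2 :=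
    ⟨_, _, _, by conv_lhs => rw [← v.sum_repr Xp, Fin.sum_univ_three]⟩
  have hBa0 : B Xm (v 0) = a0 * ε 0 := by
    rw [hXmE]; simp [LinearMap.add_apply, LinearMap.smul_apply, hB00, hB10, hB20, smul_eq_mul]
  have hBa1 : B Xm (v 1) = a1 * ε 1 := by
    rw [hXmE]; simp [LinearMap.add_apply, LinearMap.smul_apply, hB01, hB11, hB21, smul_eq_mul]
  have hBa2 : B Xm (v 2) = a2 * ε 2 := by
    rw [hXmE]; simp [LinearMap.add_apply, LinearMap.smul_apply, hB02, hB12, hB22, smul_eq_mul]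
  have ha0' : a0 ≠ 0 := by
    intro h; apply ha0; rw [hBa0, h, zero_mul]
  have hNa : ε 0 * a0 ^ 2 + ε 1 * a1 ^ 2 + ε 2 * a2 ^ 2 = 1 := by
    have t := hXm
    rw [hXmE] at t
    simp only [map_add, map_smul, LinearMap.add_apply, LinearMap.smul_apply, smul_eq_mul,
      hB00, hB01, hB02, hB10, hB11, hB12, hB20, hB21, hB22] at t
    ring_nf at t ⊢
    linarith
  have hNb : ε 0 * b0 ^ 2 + ε 1 * b1 ^ 2 + ε 2 * b2 ^ 2 = 1 := by
    have t := hXp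
    rw [hXpE] at t
    simp only [map_add, map_smul, LinearMap.add_apply, LinearMap.smul_apply, smul_eq_mul,
      hB00, hB01, hB02, hB10, hB11, hB12, hB20, hB21, hB22] at t
    ring_nf at t ⊢
    linarith
  -- alternating map helpers
  have Hadd : ∀ x x' y z : 𝔤, H ![x + x', y, z] = H ![x, y, z] + H ![x', y, z] :=
    fun x x' y z => H.toMultilinearMap.cons_add ![y, z] x x'
  have Hsm : ∀ (c : ℝ) (x y z : 𝔤), H ![c • x, y, z] = c * H ![x, y, z] :=
    fun c x y z => H.toMultilinearMap.cons_smul ![y, z] c x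
  have Fadd : ∀ x x' y : 𝔤, F ![x + x', y] = F ![x, y] + F ![x', y] :=
    fun x x' y => F.toMultilinearMap.cons_add ![y] x x'
  have Fsm : ∀ (c : ℝ) (x y : 𝔤), F ![c • x, y] = c * F ![x, y] :=
    fun c x y => F.toMultilinearMap.cons_smul ![y] c x
  have Hsw01 : ∀ x y z : 𝔤, H ![y, x, z] = -H ![x, y, z] := by
    intro x y z
    have hs := H.map_swap ![x, y, z] (i := 0) (j := 1) (by decide)
    rw [← hs]; congr 1; funext t; fin_cases t <;> simp [Equiv.swap_apply_def]
  have Hsw12 : ∀ x y z : 𝔤, H ![x, z, y] = -H ![x, y, z] := by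
    intro x y z
    have hs := H.map_swap ![x, y, z] (i := 1) (j := 2) (by decide)
    rw [← hs]; congr 1; funext t; fin_cases t <;> simp [Equiv.swap_apply_def]
  have HzA : ∀ x z : 𝔤, H ![x, x, z] = 0 :=
    fun x z => H.map_eq_zero_of_eq ![x, x, z] (i := 0) (j := 1) rfl (by decide)
  have HzB : ∀ x y : 𝔤, H ![x, y, x] = 0 :=
    fun x y => H.map_eq_zero_of_eq ![x, y, x] (i := 0) (j := 2) rfl (by decide)
  have HzC : ∀ x y : 𝔤, H ![x, y, y] = 0 :=
    fun x y => H.map_eq_zero_of_eq ![x, y, y] (i := 1) (j := 2) rfl (by decide)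
  have Fsw : ∀ x y : 𝔤, F ![y, x] = -F ![x, y] := by
    intro x y
    have hs := F.map_swap ![x, y] (i := 0) (j := 1) (by decide)
    rw [← hs]; congr 1; funext t; fin_cases t <;> simp [Equiv.swap_apply_def]
  have FzA : ∀ x : 𝔤, F ![x, x] = 0 :=
    fun x => F.map_eq_zero_of_eq ![x, x] (i := 0) (j := 1) rfl (by decide)
  -- H values
  obtain ⟨h, hhdef⟩ : ∃ r, H ![v 0, v 1, v 2] = r := ⟨_, rfl⟩
  have hT012 : H ![v 0, v 1, v 2] = h := hhdef
  have hT021 : H ![v 0, v 2, v 1] = -h := by rw [Hsw12, hT012]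
  have hT102 : H ![v 1, v 0, v 2] = -h := by rw [Hsw01, hT012]
  have hT120 : H ![v 1, v 2, v 0] = h := by rw [Hsw12 (v 1) (v 0) (v 2), hT102]; ring
  have hT201 : H ![v 2, v 0, v 1] = h := by
    rw [Hsw01 (v 0) (v 2) (v 1), hT021]; ring
  have hT210 : H ![v 2, v 1, v 0] = -h := by rw [Hsw12, hT201]
  -- F values
  obtain ⟨u0, hu0def⟩ : ∃ r, F ![v 1, v 2] = r := ⟨_, rfl⟩
  obtain ⟨u1, hu1def⟩ : ∃ r, F ![v 2, v 0] = r := ⟨_, rfl⟩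
  obtain ⟨u2, hu2def⟩ : ∃ r, F ![v 0, v 1] = r := ⟨_, rfl⟩
  have hf21 : F ![v 2, v 1] = -u0 := by rw [Fsw, hu0def]
  have hf02 : F ![v 0, v 2] = -u1 := by rw [Fsw, hu1def]
  have hf10 : F ![v 1, v 0] = -u2 := by rw [Fsw, hu2def]
  have hf00 : F ![v 0, v 0] = 0 := FzA _
  have hf11 : F ![v 1, v 1] = 0 := FzA _
  have hf22 : F ![v 2, v 2] = 0 := FzA _
  have hEm : ∀ x z : 𝔤, B ⁅x, Xm⁆ z - B ⁅Xm, z⁆ x + B ⁅z, x⁆ Xm = H ![Xm, x, z] := by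
    intro x z
    have h1 := hK x Xm z
    rw [hNXm x, map_smul, LinearMap.smul_apply, hHs, smul_eq_mul] at h1
    have h2 : H ![x, Xm, z] = - H ![Xm, x, z] := Hsw01 _ _ _
    linarith
  have em01 := hEm (v 0) (v 1)
  have em10 := hEm (v 1) (v 0)
  have em12 := hEm (v 1) (v 2)
  have em21 := hEm (v 2) (v 1)
  have em20 := hEm (v 2) (v 0)
  have em02 := hEm (v 0) (v 2)
  rw [hXmE] at em01 em10 em12 em21 em20 em02
  simp only [lie_add, add_lie, lie_smul, smul_lie, hb00, hb01, hb02, hb10, hb11, hb12,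
    hb20, hb21, hb22, smul_smul, map_add, map_smul, map_zero, map_neg, neg_smul, smul_zero,
    LinearMap.add_apply, LinearMap.smul_apply, LinearMap.zero_apply, LinearMap.neg_apply,
    smul_eq_mul, hB00, hB01, hB02, hB10, hB11, hB12, hB20, hB21, hB22,
    Hadd, Hsm, hT012, hT021, hT102, hT120, hT201, hT210, HzA, HzB, HzC,
    mul_zero, zero_mul, add_zero, zero_add, mul_one, mul_neg, neg_zero, neg_neg]
    at em01 em10 em12 em21 em20 em02
  have R1 : a2 * (lam 0 - lam 1) = 0 := by
    linear_combination (1/2) * em01 + (1/2) * em10 - (a2 * lam 0) * (hε2 0) + (a2 * lam 1) * (hε2 1)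
  have R2 : a2 * (lam 2 + h) = 0 := by
    linear_combination (1/2) * em10 - (1/2) * em01 - (a2 * lam 2) * (hε2 2)
  have R3 : a0 * (lam 1 - lam 2) = 0 := by
    linear_combination (1/2) * em12 + (1/2) * em21 - (a0 * lam 1) * (hε2 1) + (a0 * lam 2) * (hε2 2)
  have R4 : a0 * (lam 0 + h) = 0 := by
    linear_combination (1/2) * em21 - (1/2) * em12 - (a0 * lam 0) * (hε2 0)
  have R5 : a1 * (lam 2 - lam 0) = 0 := by
    linear_combination (1/2) * em20 + (1/2) * em02 - (a1 * lam 2) * (hε2 2) + (a1 * lam 0) * (hε2 0)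
  have R6 : a1 * (lam 1 + h) = 0 := by
    linear_combination (1/2) * em02 - (1/2) * em20 - (a1 * lam 1) * (hε2 1)
  have hEp : ∀ x z : 𝔤, B ⁅x, Xp⁆ z - B ⁅Xp, z⁆ x + B ⁅z, x⁆ Xp
      = -H ![Xp, x, z] - 2 * B (Jp (Fs x)) z := by
    intro x z
    have h1 := hK x Xp z
    rw [hNXp x, map_sub, map_smul, LinearMap.sub_apply, LinearMap.smul_apply, hHs,
      smul_eq_mul] at h1
    linarith
  have ep01 := hEp (v 0) (v 1)
  have ep10 := hEp (v 1) (v 0)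
  have ep12 := hEp (v 1) (v 2)
  have ep21 := hEp (v 2) (v 1)
  have ep20 := hEp (v 2) (v 0)
  have ep02 := hEp (v 0) (v 2)
  have ep00 := hEp (v 0) (v 0)
  have ep11 := hEp (v 1) (v 1)
  have ep22 := hEp (v 2) (v 2)
  rw [hXpE] at ep01 ep10 ep12 ep21 ep20 ep02 ep00 ep11 ep22
  simp only [lie_add, add_lie, lie_smul, smul_lie, hb00, hb01, hb02, hb10, hb11, hb12,
    hb20, hb21, hb22, smul_smul, map_add, map_smul, map_zero, map_neg, neg_smul, smul_zero,
    LinearMap.add_apply, LinearMap.smul_apply, LinearMap.zero_apply, LinearMap.neg_apply,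
    smul_eq_mul, hB00, hB01, hB02, hB10, hB11, hB12, hB20, hB21, hB22,
    Hadd, Hsm, hT012, hT021, hT102, hT120, hT201, hT210, HzA, HzB, HzC,
    mul_zero, zero_mul, add_zero, zero_add, mul_one, mul_neg, neg_zero, neg_neg]
    at ep01 ep10 ep12 ep21 ep20 ep02 ep00 ep11 ep22
  have hg01E : B (Jp (Fs (v 0))) (v 1) = -(1/2) * (b2 * (lam 0 - lam 1 - lam 2 + h)) := by
    linear_combination (1/2) * ep01 - (b2 * lam 0/2) * (hε2 0) + (b2 * lam 1/2) * (hε2 1)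
      + (b2 * lam 2/2) * (hε2 2)
  have hg10E : B (Jp (Fs (v 1))) (v 0) = -(1/2) * (b2 * (lam 0 - lam 1 + lam 2 - h)) := by
    linear_combination (1/2) * ep10 - (b2 * lam 0/2) * (hε2 0) + (b2 * lam 1/2) * (hε2 1)
      - (b2 * lam 2/2) * (hε2 2)
  have hg12E : B (Jp (Fs (v 1))) (v 2) = -(1/2) * (b0 * (lam 1 - lam 2 - lam 0 + h)) := by
    linear_combination (1/2) * ep12 - (b0 * lam 1/2) * (hε2 1) + (b0 * lam 2/2) * (hε2 2)
      + (b0 * lam 0/2) * (hε2 0)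
  have hg21E : B (Jp (Fs (v 2))) (v 1) = -(1/2) * (b0 * (lam 1 - lam 2 + lam 0 - h)) := by
    linear_combination (1/2) * ep21 - (b0 * lam 1/2) * (hε2 1) + (b0 * lam 2/2) * (hε2 2)
      - (b0 * lam 0/2) * (hε2 0)
  have hg20E : B (Jp (Fs (v 2))) (v 0) = -(1/2) * (b1 * (lam 2 - lam 0 - lam 1 + h)) := by
    linear_combination (1/2) * ep20 - (b1 * lam 2/2) * (hε2 2) + (b1 * lam 0/2) * (hε2 0)
      + (b1 * lam 1/2) * (hε2 1)
  have hg02E : B (Jp (Fs (v 0))) (v 2) = -(1/2) * (b1 * (lam 2 - lam 0 + lam 1 - h)) := by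
    linear_combination (1/2) * ep02 - (b1 * lam 2/2) * (hε2 2) + (b1 * lam 0/2) * (hε2 0)
      - (b1 * lam 1/2) * (hε2 1)
  have hg00E : B (Jp (Fs (v 0))) (v 0) = 0 := by linear_combination (1/2) * ep00
  have hg11E : B (Jp (Fs (v 1))) (v 1) = 0 := by linear_combination (1/2) * ep11
  have hg22E : B (Jp (Fs (v 2))) (v 2) = 0 := by linear_combination (1/2) * ep22
  -- cross relations from F(Xm, ·) = 0
  have cr0 := hFXm (v 0)
  have cr1 := hFXm (v 1)
  have cr2 := hFXm (v 2)
  rw [hXmE] at cr0 cr1 cr2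
  simp only [Fadd, Fsm, hu0def, hu1def, hu2def, hf21, hf02, hf10, hf00, hf11, hf22,
    mul_zero, zero_mul, add_zero, zero_add, mul_neg, mul_one, neg_zero] at cr0 cr1 cr2
  -- coefficient lemma
  have hco0 : ∀ q : 𝔤, v.repr q 0 = ε 0 * B q (v 0) := by
    intro q
    have hq : q = v.repr q 0 • v 0 + v.repr q 1 • v 1 + v.repr q 2 • v 2 := by
      conv_lhs => rw [← v.sum_repr q, Fin.sum_univ_three]
    have hv : B q (v 0) = v.repr q 0 * ε 0 := by
      conv_lhs => rw [hq]
      simp only [map_add, map_smul, LinearMap.add_apply, LinearMap.smul_apply, smul_eq_mul,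
        hB00, hB10, hB20, mul_zero, add_zero, zero_add]
    rw [hv]; rcases hε 0 with e | e <;> rw [e] <;> ring
  have hco1 : ∀ q : 𝔤, v.repr q 1 = ε 1 * B q (v 1) := by
    intro q
    have hq : q = v.repr q 0 • v 0 + v.repr q 1 • v 1 + v.repr q 2 • v 2 := by
      conv_lhs => rw [← v.sum_repr q, Fin.sum_univ_three]
    have hv : B q (v 1) = v.repr q 1 * ε 1 := by
      conv_lhs => rw [hq]
      simp only [map_add, map_smul, LinearMap.add_apply, LinearMap.smul_apply, smul_eq_mul,
        hB01, hB11, hB21, mul_zero, add_zero, zero_add]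
    rw [hv]; rcases hε 1 with e | e <;> rw [e] <;> ring
  have hco2 : ∀ q : 𝔤, v.repr q 2 = ε 2 * B q (v 2) := by
    intro q
    have hq : q = v.repr q 0 • v 0 + v.repr q 1 • v 1 + v.repr q 2 • v 2 := by
      conv_lhs => rw [← v.sum_repr q, Fin.sum_univ_three]
    have hv : B q (v 2) = v.repr q 2 * ε 2 := by
      conv_lhs => rw [hq]
      simp only [map_add, map_smul, LinearMap.add_apply, LinearMap.smul_apply, smul_eq_mul,
        hB02, hB12, hB22, mul_zero, add_zero, zero_add]
    rw [hv]; rcases hε 2 with e | e <;> rw [e] <;> ring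
  have hBexp : ∀ p q : 𝔤, B p q = ε 0 * (B p (v 0) * B q (v 0)) + ε 1 * (B p (v 1) * B q (v 1))
      + ε 2 * (B p (v 2) * B q (v 2)) := by
    intro p q
    have hq : q = v.repr q 0 • v 0 + v.repr q 1 • v 1 + v.repr q 2 • v 2 := by
      conv_lhs => rw [← v.sum_repr q, Fin.sum_univ_three]
    conv_lhs => rw [hq]
    rw [map_add, map_add, map_smul, map_smul, map_smul]
    rw [hco0 q, hco1 q, hco2 q]
    simp only [smul_eq_mul]
    ring
  -- span lemma
  have hvz : ∀ w : 𝔤, B w (v 0) = 0 → B w (v 1) = 0 → B w (v 2) = 0 → w = 0 := by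
    intro w h0 h1 h2
    apply hBnd
    intro y
    rw [hBexp w y, h0, h1, h2]
    ring
  -- c values
  have hcB0 : B (Fs (v 0)) Xp = u2 * b1 - u1 * b2 := by
    rw [hXpE]
    simp only [map_add, map_smul, smul_eq_mul]
    simp only [hFs, hu2def, hf02, hf00]
    ring
  have hcB1 : B (Fs (v 1)) Xp = -(u2 * b0) + u0 * b2 := by
    rw [hXpE]
    simp only [map_add, map_smul, smul_eq_mul]
    simp only [hFs, hf10, hu0def, hf11]
    ring
  have hcB2 : B (Fs (v 2)) Xp = u1 * b0 - u0 * b1 := by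
    rw [hXpE]
    simp only [map_add, map_smul, smul_eq_mul]
    simp only [hFs, hu1def, hf21, hf22]
    ring
  -- Jp-free constraints
  have hII : ∀ x y : 𝔤, B (Jp x) y + B (Jp y) x = 0 := by
    intro x y
    rw [hJpskew x y, hBsymm (Jp y) x]
    ring
  have hIII : ∀ x y : 𝔤, B (Jp x) (Jp y) = B x y - B y Xp * B x Xp := by
    intro x y
    rw [hJpskew x (Jp y), hJp2 y, map_add, map_neg, map_smul, smul_eq_mul]
    ring
  have hBb0 : B Xp (v 0) = b0 * ε 0 := by
    rw [hXpE]; simp [LinearMap.add_apply, LinearMap.smul_apply, hB00, hB10, hB20, smul_eq_mul]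
  have hBb1 : B Xp (v 1) = b1 * ε 1 := by
    rw [hXpE]; simp [LinearMap.add_apply, LinearMap.smul_apply, hB01, hB11, hB21, smul_eq_mul]
  have hBb2 : B Xp (v 2) = b2 * ε 2 := by
    rw [hXpE]; simp [LinearMap.add_apply, LinearMap.smul_apply, hB02, hB12, hB22, smul_eq_mul]
  have hcF0 : F ![v 0, Xp] = u2 * b1 - u1 * b2 := by rw [← hFs, hcB0]
  have hcF1 : F ![v 1, Xp] = -(u2 * b0) + u0 * b2 := by rw [← hFs, hcB1]
  have hcF2 : F ![v 2, Xp] = u1 * b0 - u0 * b1 := by rw [← hFs, hcB2]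
  have ii01 := hII (Fs (v 0)) (Fs (v 1))
  have ii02 := hII (Fs (v 0)) (Fs (v 2))
  have ii12 := hII (Fs (v 1)) (Fs (v 2))
  have ii11 := hII (Fs (v 1)) (Fs (v 1))
  have ii22 := hII (Fs (v 2)) (Fs (v 2))
  rw [hBexp (Jp (Fs (v 0))) (Fs (v 1)), hBexp (Jp (Fs (v 1))) (Fs (v 0))] at ii01
  rw [hBexp (Jp (Fs (v 0))) (Fs (v 2)), hBexp (Jp (Fs (v 2))) (Fs (v 0))] at ii02
  rw [hBexp (Jp (Fs (v 1))) (Fs (v 2)), hBexp (Jp (Fs (v 2))) (Fs (v 1))] at ii12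
  rw [hBexp (Jp (Fs (v 1))) (Fs (v 1))] at ii11
  rw [hBexp (Jp (Fs (v 2))) (Fs (v 2))] at ii22
  have iii11 := hIII (Fs (v 1)) (Fs (v 1))
  have iii22 := hIII (Fs (v 2)) (Fs (v 2))
  have iii12 := hIII (Fs (v 1)) (Fs (v 2))
  rw [hBexp (Jp (Fs (v 1))) (Jp (Fs (v 1))), hBexp (Fs (v 1)) (Fs (v 1)), hcB1] at iii11
  rw [hBexp (Jp (Fs (v 2))) (Jp (Fs (v 2))), hBexp (Fs (v 2)) (Fs (v 2)), hcB2] at iii22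
  rw [hBexp (Jp (Fs (v 1))) (Jp (Fs (v 2))), hBexp (Fs (v 1)) (Fs (v 2)), hcB1, hcB2] at iii12
  simp only [hFs, hu0def, hu1def, hu2def, hf21, hf02, hf10, hf00, hf11, hf22,
    hg01E, hg10E, hg12E, hg21E, hg20E, hg02E, hg00E, hg11E, hg22E]
    at ii01 ii02 ii12 ii11 ii22 iii11 iii22 iii12
  -- clean relations
  have hl12 : lam 1 = lam 2 := by
    have := (mul_eq_zero.mp R3).resolve_left ha0'; linarith
  have hh : h = -lam 0 := by
    have := (mul_eq_zero.mp R4).resolve_left ha0'; linarith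
  have P1 : a0 * u1 = a1 * u0 := by linear_combination -cr2
  have P2 : a0 * u2 = a2 * u0 := by linear_combination cr1
  have hu0sq : ∀ t : ℝ, t ≠ 0 → 0 < t * t := fun t ht => mul_self_pos.mpr ht
  -- ============ main claim : u0 = 0 ============
  have hU : u0 = 0 := by
    by_contra hu0ne
    by_cases hl0 : lam 0 = 0
    · by_cases hl1 : lam 1 = 0
      · -- abelian case
        have hl2 : lam 2 = 0 := by rw [← hl12]; exact hl1
        have hh0 : h = 0 := by rw [hh, hl0, neg_zero]
        have z01 : B (Jp (Fs (v 0))) (v 1) = 0 := by rw [hg01E, hl0, hl1, hl2, hh0]; ring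
        have z02 : B (Jp (Fs (v 0))) (v 2) = 0 := by rw [hg02E, hl0, hl1, hl2, hh0]; ring
        have z10 : B (Jp (Fs (v 1))) (v 0) = 0 := by rw [hg10E, hl0, hl1, hl2, hh0]; ring
        have z12 : B (Jp (Fs (v 1))) (v 2) = 0 := by rw [hg12E, hl0, hl1, hl2, hh0]; ring
        have z20 : B (Jp (Fs (v 2))) (v 0) = 0 := by rw [hg20E, hl0, hl1, hl2, hh0]; ring
        have z21 : B (Jp (Fs (v 2))) (v 1) = 0 := by rw [hg21E, hl0, hl1, hl2, hh0]; ring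
        have Z0 : Jp (Fs (v 0)) = 0 := hvz _ hg00E z01 z02
        have Z1 : Jp (Fs (v 1)) = 0 := hvz _ z10 hg11E z12
        have Z2 : Jp (Fs (v 2)) = 0 := hvz _ z20 z21 hg22E
        have E0 : Fs (v 0) = B (Fs (v 0)) Xp • Xp := by
          have e := hJp2 (Fs (v 0))
          rw [Z0, map_zero] at e
          have e2 : -Fs (v 0) + B (Fs (v 0)) Xp • Xp = 0 := e.symm
          rwa [neg_add_eq_zero] at e2
        have E1 : Fs (v 1) = B (Fs (v 1)) Xp • Xp := by
          have e := hJp2 (Fs (v 1))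
          rw [Z1, map_zero] at e
          have e2 : -Fs (v 1) + B (Fs (v 1)) Xp • Xp = 0 := e.symm
          rwa [neg_add_eq_zero] at e2
        have E2 : Fs (v 2) = B (Fs (v 2)) Xp • Xp := by
          have e := hJp2 (Fs (v 2))
          rw [Z2, map_zero] at e
          have e2 : -Fs (v 2) + B (Fs (v 2)) Xp • Xp = 0 := e.symm
          rwa [neg_add_eq_zero] at e2
        have q00 := congrArg (fun t => B t (v 0)) E0
        have q01 := congrArg (fun t => B t (v 1)) E0
        have q12 := congrArg (fun t => B t (v 2)) E1
        have q21 := congrArg (fun t => B t (v 1)) E2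
        have q22 := congrArg (fun t => B t (v 2)) E2
        simp only [map_smul, LinearMap.smul_apply, smul_eq_mul, hFs, hu0def, hu1def, hu2def,
          hf21, hf02, hf10, hf00, hf11, hf22, hcB0, hcB1, hcB2, hcF0, hcF1, hcF2,
          hBb0, hBb1, hBb2] at q00 q01 q12 q21 q22
        -- q00 : 0 = (u2*b1 - u1*b2) * (b0*ε 0), q01 : u2 = (u2*b1 - u1*b2) * (b1*ε 1), etc.
        have hA : u2 * b0 = 0 := by
          linear_combination b0 * q01 - (ε 0 * ε 1 * b1) * q00
            - (ε 1 * b1 * b0 * (u2 * b1 - u1 * b2)) * (hε2 0)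
        have hBq : u0 * b2 = 0 := by
          linear_combination (-b2) * q21 + (ε 1 * ε 2 * b1) * q22
            + (ε 1 * b1 * b2 * (u1 * b0 - u0 * b1)) * (hε2 2)
        have hu00 : u0 = 0 := by
          linear_combination q12 - (ε 2 * b2) * hA + (ε 2 * b2) * hBq
        exact hu0ne hu00
      · -- lam 0 = 0, lam 1 ≠ 0
        have hh0 : h = 0 := by rw [hh, hl0, neg_zero]
        have ha1z : a1 = 0 := by
          have e : a1 * lam 1 = 0 := by linear_combination R6 - a1 * hh + a1 * hl0
          exact (mul_eq_zero.mp e).resolve_right hl1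
        have hl2 : lam 2 ≠ 0 := by rw [← hl12]; exact hl1
        have ha2z : a2 = 0 := by
          have e : a2 * lam 2 = 0 := by linear_combination R2 - a2 * hh + a2 * hl0
          exact (mul_eq_zero.mp e).resolve_right hl2
        have hu1z : u1 = 0 := by
          have e : a0 * u1 = 0 := by linear_combination P1 + u0 * ha1z
          exact (mul_eq_zero.mp e).resolve_left ha0'
        have hu2z : u2 = 0 := by
          have e : a0 * u2 = 0 := by linear_combination P2 + u0 * ha2z
          exact (mul_eq_zero.mp e).resolve_left ha0'
        simp only [hh, hl0, ← hl12, hu1z, hu2z] at ii01 ii02 iii11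
        have key1 : (ε 2 * lam 1 * u0) * b1 = 0 := by linear_combination (-1) * ii01
        have hb1z : b1 = 0 := by
          exact (mul_eq_zero.mp key1).resolve_left
            (mul_ne_zero (mul_ne_zero (hεne 2) hl1) hu0ne)
        have key2 : (ε 1 * lam 1 * u0) * b2 = 0 := by linear_combination (-1) * ii02
        have hb2z : b2 = 0 := by
          exact (mul_eq_zero.mp key2).resolve_left
            (mul_ne_zero (mul_ne_zero (hεne 1) hl1) hu0ne)
        have key3 : ε 2 * (u0 * u0) = 0 := by
          linear_combination (-1) * iii11 + (u0 * u0 * b2) * hb2z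
        rcases hε 2 with e2 | e2 <;> rw [e2] at key3 <;>
          [linarith [hu0sq u0 hu0ne]; linarith [hu0sq u0 hu0ne]]
    · -- lam 0 ≠ 0
      by_cases ha12 : a1 = 0 ∧ a2 = 0
      · -- case (d)
        obtain ⟨ha1z, ha2z⟩ := ha12
        have hNa' : ε 0 * a0 ^ 2 = 1 := by
          linear_combination hNa - (ε 1 * a1) * ha1z - (ε 2 * a2) * ha2z
        have he0 : ε 0 = 1 := by
          rcases hε 0 with e | e
          · exact e
          · exfalso; rw [e] at hNa'; have := sq_nonneg a0; linarith
        have hu1z : u1 = 0 := by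
          have e : a0 * u1 = 0 := by linear_combination P1 + u0 * ha1z
          exact (mul_eq_zero.mp e).resolve_left ha0'
        have hu2z : u2 = 0 := by
          have e : a0 * u2 = 0 := by linear_combination P2 + u0 * ha2z
          exact (mul_eq_zero.mp e).resolve_left ha0'
        simp only [hh, ← hl12, hu1z, hu2z, he0] at ii01 ii02 ii11 iii11 iii22 iii12
        have key0 : (ε 2 * lam 0 * u0) * b0 = 0 := by linear_combination (1/2) * ii11
        have hb0z : b0 = 0 := (mul_eq_zero.mp key0).resolve_left
          (mul_ne_zero (mul_ne_zero (hεne 2) hl0) hu0ne)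
        by_cases hl1c : lam 1 = 0
        · simp only [hl1c, hb0z] at iii11 iii22 iii12
          have keyB : (lam 0 * lam 0 + u0 * u0) * (b1 * b2) = 0 := by
            linear_combination (-1) * iii12
          have hb12z : b1 * b2 = 0 := by
            refine (mul_eq_zero.mp keyB).resolve_left ?_
            have h1 := hu0sq u0 hu0ne
            have h2 := hu0sq (lam 0) hl0
            positivity
          rcases mul_eq_zero.mp hb12z with hbz | hbz
          · rw [hbz] at iii22
            have key : ε 1 * (u0 * u0) = 0 := by linear_combination (-1) * iii22
            rcases hε 1 with e1 | e1 <;> rw [e1] at key <;>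
              [linarith [hu0sq u0 hu0ne]; linarith [hu0sq u0 hu0ne]]
          · rw [hbz] at iii11
            have key : ε 2 * (u0 * u0) = 0 := by linear_combination (-1) * iii11
            rcases hε 2 with e1 | e1 <;> rw [e1] at key <;>
              [linarith [hu0sq u0 hu0ne]; linarith [hu0sq u0 hu0ne]]
        · simp only [hb0z] at ii01 ii02
          have key1 : (ε 2 * lam 1 * u0) * b1 = 0 := by linear_combination (-1) * ii01
          have hb1z : b1 = 0 := (mul_eq_zero.mp key1).resolve_left
            (mul_ne_zero (mul_ne_zero (hεne 2) hl1c) hu0ne)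
          have key2 : (ε 1 * lam 1 * u0) * b2 = 0 := by linear_combination (-1) * ii02
          have hb2z : b2 = 0 := (mul_eq_zero.mp key2).resolve_left
            (mul_ne_zero (mul_ne_zero (hεne 1) hl1c) hu0ne)
          rw [hb0z, hb1z, hb2z] at hNb
          norm_num at hNb
      · -- case (c)
        have hL1 : lam 1 = lam 0 := by
          by_cases ha1c : a1 = 0
          · have ha2c : a2 ≠ 0 := fun hz => ha12 ⟨ha1c, hz⟩
            have e : lam 0 - lam 1 = 0 := (mul_eq_zero.mp R1).resolve_left ha2c
            linarith
          · have e : lam 2 - lam 0 = 0 := (mul_eq_zero.mp R5).resolve_left ha1c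
            linarith [hl12]
        have hL2 : lam 2 = lam 0 := by rw [← hl12]; exact hL1
        simp only [hh, hL1, hL2] at ii01 ii02 ii12 ii11 ii22
        have hlu : ε 2 * lam 0 * u0 ≠ 0 := mul_ne_zero (mul_ne_zero (hεne 2) hl0) hu0ne
        have key01 : (ε 2 * lam 0 * u0) * (a0 * b1 + a1 * b0) = 0 := by
          linear_combination (-a0) * ii01 - (ε 2 * lam 0 * b0) * P1
        have pr01 : a0 * b1 + a1 * b0 = 0 := (mul_eq_zero.mp key01).resolve_left hlu
        have key02 : (ε 1 * lam 0 * u0) * (a0 * b2 + a2 * b0) = 0 := by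
          linear_combination (-a0) * ii02 - (ε 1 * lam 0 * b0) * P2
        have pr02 : a0 * b2 + a2 * b0 = 0 := (mul_eq_zero.mp key02).resolve_left
          (mul_ne_zero (mul_ne_zero (hεne 1) hl0) hu0ne)
        have key12 : (ε 0 * lam 0 * u0) * (a1 * b2 + a2 * b1) = 0 := by
          linear_combination (-a0) * ii12 - (ε 0 * lam 0 * b2) * P1 - (ε 0 * lam 0 * b1) * P2
        have pr12 : a1 * b2 + a2 * b1 = 0 := (mul_eq_zero.mp key12).resolve_left
          (mul_ne_zero (mul_ne_zero (hεne 0) hl0) hu0ne)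
        have key11 : (lam 0 * u0) * (ε 0 * (a2 * b2) + ε 2 * (a0 * b0)) = 0 := by
          linear_combination (a0 / 2) * ii11 - (lam 0 * ε 0 * b2) * P2
        have pr11 : ε 0 * (a2 * b2) + ε 2 * (a0 * b0) = 0 :=
          (mul_eq_zero.mp key11).resolve_left (mul_ne_zero hl0 hu0ne)
        have key22 : (lam 0 * u0) * (ε 0 * (a1 * b1) + ε 1 * (a0 * b0)) = 0 := by
          linear_combination (a0 / 2) * ii22 - (lam 0 * ε 0 * b1) * P1
        have pr22 : ε 0 * (a1 * b1) + ε 1 * (a0 * b0) = 0 :=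
          (mul_eq_zero.mp key22).resolve_left (mul_ne_zero hl0 hu0ne)
        by_cases hb0c : b0 = 0
        · have hb1z : b1 = 0 := by
            have e : a0 * b1 = 0 := by linear_combination pr01 - a1 * hb0c
            exact (mul_eq_zero.mp e).resolve_left ha0'
          have hb2z : b2 = 0 := by
            have e : a0 * b2 = 0 := by linear_combination pr02 - a2 * hb0c
            exact (mul_eq_zero.mp e).resolve_left ha0'
          rw [hb0c, hb1z, hb2z] at hNb
          norm_num at hNb
        · have ha12z : a1 * a2 = 0 := by
            have e : (a1 * a2) * b0 = 0 := by
              linear_combination (a2 / 2) * pr01 + (a1 / 2) * pr02 - (a0 / 2) * pr12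
            exact (mul_eq_zero.mp e).resolve_right hb0c
          by_cases ha1c : a1 = 0
          · have ha2c : a2 ≠ 0 := fun hz => ha12 ⟨ha1c, hz⟩
            have e : ε 1 * (a0 * b0) = 0 := by linear_combination pr22 - (ε 0 * b1) * ha1c
            have e2 : a0 * b0 = 0 := by
              rcases hε 1 with e1 | e1 <;> rw [e1] at e <;>
                [linear_combination e; linear_combination -e]
            rcases mul_eq_zero.mp e2 with e3 | e3
            · exact ha0' e3
            · exact hb0c e3
          · have ha2z : a2 = 0 := (mul_eq_zero.mp ha12z).resolve_left ha1c
            have e : ε 2 * (a0 * b0) = 0 := by linear_combination pr11 - (ε 0 * b2) * ha2z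
            have e2 : a0 * b0 = 0 := by
              rcases hε 2 with e1 | e1 <;> rw [e1] at e <;>
                [linear_combination e; linear_combination -e]
            rcases mul_eq_zero.mp e2 with e3 | e3
            · exact ha0' e3
            · exact hb0c e3
  have hu1z : u1 = 0 := by
    have e : a0 * u1 = 0 := by linear_combination P1 + a1 * hU
    exact (mul_eq_zero.mp e).resolve_left ha0'
  have hu2z : u2 = 0 := by
    have e : a0 * u2 = 0 := by linear_combination P2 + a2 * hU
    exact (mul_eq_zero.mp e).resolve_left ha0'
  have hFs0z : Fs (v 0) = 0 :=
    hvz _ (by rw [hFs]; exact hf00) (by rw [hFs, hu2def]; exact hu2z)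
      (by rw [hFs, hf02, hu1z]; ring)
  have hFs1z : Fs (v 1) = 0 :=
    hvz _ (by rw [hFs, hf10, hu2z]; ring) (by rw [hFs]; exact hf11)
      (by rw [hFs, hu0def]; exact hU)
  have hFs2z : Fs (v 2) = 0 :=
    hvz _ (by rw [hFs, hu1def]; exact hu1z) (by rw [hFs, hf21, hU]; ring)
      (by rw [hFs]; exact hf22)
  rw [hFs0z] at hg01E hg02E
  rw [hFs1z] at hg10E hg12E
  rw [hFs2z] at hg20E hg21E
  simp only [map_zero, LinearMap.zero_apply] at hg01E hg02E hg10E hg12E hg20E hg21E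
  have bb2A : b2 * (lam 0 - lam 1) = 0 := by linear_combination hg01E + hg10E
  have bb2B : b2 * (lam 2 - h) = 0 := by linear_combination hg10E - hg01E
  have bb0A : b0 * (lam 1 - lam 2) = 0 := by linear_combination hg12E + hg21E
  have bb0B : b0 * (lam 0 - h) = 0 := by linear_combination hg21E - hg12E
  have bb1A : b1 * (lam 2 - lam 0) = 0 := by linear_combination hg20E + hg02E
  have bb1B : b1 * (lam 1 - h) = 0 := by linear_combination hg02E - hg20E
  have hl0z : lam 0 = 0 := by
    by_contra hl0ne
    have hb0z : b0 = 0 := by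
      have e : b0 * lam 0 = 0 := by linear_combination (1/2) * bb0B + (b0/2) * hh
      exact (mul_eq_zero.mp e).resolve_right hl0ne
    have hb2z : b2 = 0 := by
      have e : b2 * lam 0 = 0 := by
        linear_combination (1/2) * bb2A + (1/2) * bb2B + (b2/2) * hh + (b2/2) * hl12
      exact (mul_eq_zero.mp e).resolve_right hl0ne
    have hb1z : b1 = 0 := by
      have e : b1 * lam 0 = 0 := by
        linear_combination (1/2) * bb1B - (1/2) * bb1A + (b1/2) * hh - (b1/2) * hl12
      exact (mul_eq_zero.mp e).resolve_right hl0ne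
    rw [hb0z, hb1z, hb2z] at hNb
    norm_num at hNb
  have hh0 : h = 0 := by rw [hh, hl0z, neg_zero]
  have tri : ∀ i : Fin 3, i = 0 ∨ i = 1 ∨ i = 2 := by decide
  refine ⟨?_, ?_, ?_⟩
  · -- H = 0
    apply Module.Basis.ext_alternating v
    intro idx _
    have hcv : (fun i => v (idx i)) = ![v (idx 0), v (idx 1), v (idx 2)] := by
      funext t; fin_cases t <;> rfl
    rw [hcv]
    rcases tri (idx 0) with h0 | h0 | h0 <;> rcases tri (idx 1) with h1 | h1 | h1 <;>
      rcases tri (idx 2) with h2 | h2 | h2 <;> rw [h0, h1, h2] <;>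
      simp only [hT012, hT021, hT102, hT120, hT201, hT210, HzA, HzB, HzC, hh0,
        AlternatingMap.zero_apply, neg_zero]
  · -- F = 0
    apply Module.Basis.ext_alternating v
    intro idx _
    have hcv : (fun i => v (idx i)) = ![v (idx 0), v (idx 1)] := by
      funext t; fin_cases t <;> rfl
    rw [hcv]
    rcases tri (idx 0) with h0 | h0 | h0 <;> rcases tri (idx 1) with h1 | h1 | h1 <;>
      rw [h0, h1] <;>
      simp only [hu0def, hu1def, hu2def, hf21, hf02, hf10, hf00, hf11, hf22, hU, hu1z, hu2z,
        AlternatingMap.zero_apply, neg_zero]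
  · -- structure
    by_cases hl1c : lam 1 = 0
    · left
      have hl2c : lam 2 = 0 := by rw [← hl12]; exact hl1c
      intro x y
      have hx : x = v.repr x 0 • v 0 + v.repr x 1 • v 1 + v.repr x 2 • v 2 := by
        conv_lhs => rw [← v.sum_repr x, Fin.sum_univ_three]
      have hy : y = v.repr y 0 • v 0 + v.repr y 1 • v 1 + v.repr y 2 • v 2 := by
        conv_lhs => rw [← v.sum_repr y, Fin.sum_univ_three]
      rw [hx, hy]
      simp only [lie_add, add_lie, lie_smul, smul_lie, hb00, hb01, hb02, hb10, hb11, hb12,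
        hb20, hb21, hb22, hl0z, hl1c, hl2c, mul_zero, zero_mul, zero_smul, smul_zero,
        neg_zero, add_zero, zero_add, neg_smul]
    · right
      have hl2c : lam 2 ≠ 0 := by rw [← hl12]; exact hl1c
      have ha1z : a1 = 0 := by
        have e : a1 * lam 1 = 0 := by linear_combination R6 - a1 * hh0
        exact (mul_eq_zero.mp e).resolve_right hl1c
      have ha2z : a2 = 0 := by
        have e : a2 * lam 2 = 0 := by linear_combination R2 - a2 * hh0
        exact (mul_eq_zero.mp e).resolve_right hl2c
      have hb1z : b1 = 0 := by
        have e : b1 * lam 1 = 0 := by linear_combination bb1B + b1 * hh0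
        exact (mul_eq_zero.mp e).resolve_right hl1c
      have hb2z : b2 = 0 := by
        have e : b2 * lam 2 = 0 := by linear_combination bb2B + b2 * hh0
        exact (mul_eq_zero.mp e).resolve_right hl2c
      have hNa' : ε 0 * a0 ^ 2 = 1 := by
        linear_combination hNa - (ε 1 * a1) * ha1z - (ε 2 * a2) * ha2z
      have he0 : ε 0 = 1 := by
        rcases hε 0 with e | e
        · exact e
        · exfalso; rw [e] at hNa'; have := sq_nonneg a0; linarith
      have ha0sq : a0 ^ 2 = 1 := by rw [he0] at hNa'; linarith
      have hNb' : ε 0 * b0 ^ 2 = 1 := by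
        linear_combination hNb - (ε 1 * b1) * hb1z - (ε 2 * b2) * hb2z
      have hb0sq : b0 ^ 2 = 1 := by rw [he0] at hNb'; linarith
      have hXmv : Xm = a0 • v 0 := by rw [hXmE, ha1z, ha2z]; simp
      have hXpv : Xp = b0 • v 0 := by rw [hXpE, hb1z, hb2z]; simp
      set w : Module.Basis (Fin 3) ℝ 𝔤 :=
        (v.reindex (Equiv.swap 0 1)).unitsSMul ![1, Units.mk0 a0 ha0', 1] with hwdef
      have hw0 : w 0 = v 1 := by
        rw [hwdef, Module.Basis.unitsSMul_apply, Module.Basis.reindex_apply]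
        simp
      have hw1 : w 1 = a0 • v 0 := by
        rw [hwdef, Module.Basis.unitsSMul_apply, Module.Basis.reindex_apply]
        simp [Units.smul_def]
      have hw2 : w 2 = v 2 := by
        rw [hwdef, Module.Basis.unitsSMul_apply, Module.Basis.reindex_apply]
        simp [Equiv.swap_apply_of_ne_of_ne]
      have o01 : B (w 0) (w 1) = 0 := by
        rw [hw0, hw1]; simp [hB10, smul_eq_mul]
      have o10 : B (w 1) (w 0) = 0 := by
        rw [hw0, hw1]; simp [hB01, smul_eq_mul]
      have o02 : B (w 0) (w 2) = 0 := by rw [hw0, hw2]; exact hB12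
      have o20 : B (w 2) (w 0) = 0 := by rw [hw0, hw2]; exact hB21
      have o12 : B (w 1) (w 2) = 0 := by
        rw [hw1, hw2]; simp [hB02, smul_eq_mul]
      have o21 : B (w 2) (w 1) = 0 := by
        rw [hw1, hw2]; simp [hB20, smul_eq_mul]
      have nw0 : B (w 0) (w 0) = ε 1 := by rw [hw0]; exact hB11
      have nw2 : B (w 2) (w 2) = ε 2 := by rw [hw2]; exact hB22
      have nw1 : B (w 1) (w 1) = 1 := by
        rw [hw1]
        simp only [map_smul, LinearMap.smul_apply, smul_eq_mul, hB00, he0, mul_one]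
        linear_combination ha0sq
      have hbw01 : ⁅w 0, w 1⁆ = (B (w 2) (w 2) * -(a0 * lam 1)) • w 2 := by
        rw [nw2, hw0, hw1, hw2, lie_smul, hb10, smul_smul]
        have : a0 * -(ε 2 * lam 2) = ε 2 * -(a0 * lam 1) := by rw [← hl12]; ring
        rw [this]
      have hbw12 : ⁅w 1, w 2⁆ = (B (w 0) (w 0) * -(a0 * lam 1)) • w 0 := by
        rw [nw0, hw0, hw1, hw2, smul_lie, hb02, smul_smul]
        have : a0 * -(ε 1 * lam 1) = ε 1 * -(a0 * lam 1) := by ring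
        rw [this]
      have hbw20 : ⁅w 2, w 0⁆ = 0 := by
        rw [hw0, hw2, hb21, hl0z]
        simp
      refine ⟨w, -(a0 * lam 1), neg_ne_zero.mpr (mul_ne_zero ha0' hl1c), ?_, ?_, nw1,
        hbw01, hbw12, hbw20, ?_, ?_⟩
      · intro i j hij
        fin_cases i <;> fin_cases j <;>
          first
            | exact absurd rfl hij
            | exact o01
            | exact o10
            | exact o02
            | exact o20
            | exact o12
            | exact o21
      · have dn0 : B (w 0) (w 0) = 1 ∨ B (w 0) (w 0) = -1 := by rw [nw0]; exact hε 1
        have dn1 : B (w 1) (w 1) = 1 ∨ B (w 1) (w 1) = -1 := Or.inl nw1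
        have dn2 : B (w 2) (w 2) = 1 ∨ B (w 2) (w 2) = -1 := by rw [nw2]; exact hε 2
        intro i
        fin_cases i
        · exact dn0
        · exact dn1
        · exact dn2
      · rw [hXmv, hw1]
      · have e : (b0 - a0) * (b0 + a0) = 0 := by linear_combination hb0sq - ha0sq
        rcases mul_eq_zero.mp e with e2 | e2
        · left
          rw [hXpv, hw1]
          have : b0 = a0 := by linarith
          rw [this]
        · right
          rw [hXpv, hw1]
          have : b0 = -a0 := by linarith
          rw [this, neg_smul]




/-- Proposition 6.2 ('only if' direction): on a 3-dimensional unimodular metric Lie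
algebra `(𝔤,B)` with diagonalizable canonical operator (encoded by the orthonormal
basis `v` diagonalizing the bracket), a `B₃`-Kähler datum `(J₊,J₋,X₊,X₋,H,F)` forces
`H = 0`, `F = 0`, and either `𝔤` is abelian or it admits an orthonormal basis
`(w₁,w₂,w₃)` with `B(w₂,w₂) = 1`, `[w₁,w₂] = ε₃'λw₃`, `[w₂,w₃] = ε₁'λw₁`,
`[w₃,w₁] = 0` (`λ ≠ 0`), `X₋ = w₂` and `X₊ = ±w₂`.
Here `Hs x y` is the `B`-dual vector of `H(x,y,·)` and `Fs x` that of `F(x,·)`. -/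
theorem stmt_8 {𝔤 : Type*} [LieRing 𝔤] [LieAlgebra ℝ 𝔤]
    (B : LinearMap.BilinForm ℝ 𝔤)
    (hBsymm : ∀ x y, B x y = B y x)
    (hBnd : ∀ x, (∀ y, B x y = 0) → x = 0)
    -- unimodular with diagonalizable canonical operator: orthonormal basis
    (v : Module.Basis (Fin 3) ℝ 𝔤) (ε lam : Fin 3 → ℝ)
    (hε : ∀ i, ε i = 1 ∨ ε i = -1)
    (hortho : ∀ i j, i ≠ j → B (v i) (v j) = 0)
    (hdiag : ∀ i, B (v i) (v i) = ε i)
    (hb01 : ⁅v 0, v 1⁆ = (ε 2 * lam 2) • v 2)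
    (hb12 : ⁅v 1, v 2⁆ = (ε 0 * lam 0) • v 0)
    (hb20 : ⁅v 2, v 0⁆ = (ε 1 * lam 1) • v 1)
    -- Levi-Civita product
    (N : 𝔤 → 𝔤 → 𝔤)
    (hK : ∀ x y z, 2 * B (N x y) z = B ⁅x, y⁆ z - B ⁅y, z⁆ x + B ⁅z, x⁆ y)
    -- B₃-Kähler datum
    (Jp Jm : 𝔤 →ₗ[ℝ] 𝔤) (Xp Xm : 𝔤)
    (hJpskew : ∀ x y, B (Jp x) y = - B x (Jp y))
    (hJmskew : ∀ x y, B (Jm x) y = - B x (Jm y))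
    (hXp : B Xp Xp = 1) (hXm : B Xm Xm = 1)
    (hJpXp : Jp Xp = 0) (hJmXm : Jm Xm = 0)
    (hJp2 : ∀ x, Jp (Jp x) = -x + B x Xp • Xp)
    (hJm2 : ∀ x, Jm (Jm x) = -x + B x Xm • Xm)
    (H : AlternatingMap ℝ 𝔤 ℝ (Fin 3)) (F : AlternatingMap ℝ 𝔤 ℝ (Fin 2))
    (hdF : ∀ x y z : 𝔤, -F ![⁅x, y⁆, z] + F ![⁅x, z⁆, y] - F ![⁅y, z⁆, x] = 0)
    (hFXm : ∀ y : 𝔤, F ![Xm, y] = 0)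
    (Hs : 𝔤 → 𝔤 → 𝔤) (hHs : ∀ x y z, B (Hs x y) z = H ![x, y, z])
    (Fs : 𝔤 → 𝔤) (hFs : ∀ x y, B (Fs x) y = F ![x, y])
    (hNXm : ∀ x, N x Xm = (-(1 / 2 : ℝ)) • Hs x Xm)
    (hNXp : ∀ x, N x Xp = (-(1 / 2 : ℝ)) • Hs Xp x - Jp (Fs x)) :
    H = 0 ∧ F = 0 ∧
    ((∀ x y : 𝔤, ⁅x, y⁆ = 0) ∨
      ∃ (w : Module.Basis (Fin 3) ℝ 𝔤) (l : ℝ), l ≠ 0 ∧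
        (∀ i j, i ≠ j → B (w i) (w j) = 0) ∧
        (∀ i, B (w i) (w i) = 1 ∨ B (w i) (w i) = -1) ∧
        B (w 1) (w 1) = 1 ∧
        ⁅w 0, w 1⁆ = (B (w 2) (w 2) * l) • w 2 ∧
        ⁅w 1, w 2⁆ = (B (w 0) (w 0) * l) • w 0 ∧
        ⁅w 2, w 0⁆ = 0 ∧
        Xm = w 1 ∧ (Xp = w 1 ∨ Xp = -w 1)) := by
  have hex : B Xm (v 0) ≠ 0 ∨ B Xm (v 1) ≠ 0 ∨ B Xm (v 2) ≠ 0 := by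
    by_contra hcon
    push_neg at hcon
    obtain ⟨h0, h1, h2⟩ := hcon
    have hz : Xm = 0 := by
      apply hBnd
      intro y
      have hy : y = v.repr y 0 • v 0 + v.repr y 1 • v 1 + v.repr y 2 • v 2 := by
        conv_lhs => rw [← v.sum_repr y, Fin.sum_univ_three]
      rw [hy]
      simp [map_add, map_smul, h0, h1, h2, smul_eq_mul]
    rw [hz] at hXm
    simp at hXm
  have hcyc : ∀ i : Fin 3, (finRotate 3) i = i + 1 := by decide
  set c : Equiv.Perm (Fin 3) := finRotate 3 with hcdef
  have hc0 : c 0 = 1 := by decide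
  have hc1 : c 1 = 2 := by decide
  have hc2 : c 2 = 0 := by decide
  have hs0 : c.symm 0 = 2 := by decide
  have hs1 : c.symm 1 = 0 := by decide
  have hs2 : c.symm 2 = 1 := by decide
  rcases hex with ha | ha | ha
  · exact main_aux B hBsymm hBnd v ε lam hε hortho hdiag hb01 hb12 hb20 N hK Jp Xp Xm
      hJpskew hXp hXm hJp2 H F hFXm Hs hHs Fs hFs hNXm hNXp ha
  · have hv'ap : ∀ i, (v.reindex c.symm) i = v (c i) := by
      intro i; rw [Module.Basis.reindex_apply, Equiv.symm_symm]
    exact main_aux B hBsymm hBnd (v.reindex c.symm) (fun i => ε (c i)) (fun i => lam (c i))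
      (fun i => hε _)
      (fun i j hij => by rw [hv'ap, hv'ap]; exact hortho _ _ (fun hq => hij (c.injective hq)))
      (fun i => by rw [hv'ap]; exact hdiag _)
      (by rw [hv'ap 0, hv'ap 1, hv'ap 2, hc0, hc1, hc2]; exact hb12)
      (by rw [hv'ap 1, hv'ap 2, hv'ap 0, hc0, hc1, hc2]; exact hb20)
      (by rw [hv'ap 2, hv'ap 0, hv'ap 1, hc0, hc1, hc2]; exact hb01)
      N hK Jp Xp Xm hJpskew hXp hXm hJp2 H F hFXm Hs hHs Fs hFs hNXm hNXp
      (by rw [hv'ap 0, hc0]; exact ha)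
  · have hv'ap : ∀ i, (v.reindex c) i = v (c.symm i) := by
      intro i; rw [Module.Basis.reindex_apply]
    exact main_aux B hBsymm hBnd (v.reindex c) (fun i => ε (c.symm i)) (fun i => lam (c.symm i))
      (fun i => hε _)
      (fun i j hij => by
        rw [hv'ap, hv'ap]; exact hortho _ _ (fun hq => hij (c.symm.injective hq)))
      (fun i => by rw [hv'ap]; exact hdiag _)
      (by rw [hv'ap 0, hv'ap 1, hv'ap 2, hs0, hs1, hs2]; exact hb20)
      (by rw [hv'ap 1, hv'ap 2, hv'ap 0, hs0, hs1, hs2]; exact hb01)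
      (by rw [hv'ap 2, hv'ap 0, hv'ap 1, hs0, hs1, hs2]; exact hb12)
      N hK Jp Xp Xm hJpskew hXp hXm hJp2 H F hFXm Hs hHs Fs hFs hNXm hNXp
      (by rw [hv'ap 0, hs0]; exact ha)
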